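/- Assume k ∈ (0,1), δ, α > 0, u_H > u_L ≥ 0, (u_H+u_L)/2 > p ≥ 0, and k ≤ k̲ := (1 + √(1 − (u_H−u_L)/(2(u_H−p))))/2. Then u_G(λ) = λ^{k−1}·((u_H−p) − (u_H−u_L)δ/(2δ+λ^k α)) is monotone non-increasing on (0,∞). -/

import Mathlib

open Real Set

private lemma key_ineq (A B δ m ψ : ℝ) (hA : 0 < A) (hB : 0 < B) (hBA : B < 2*A)
    (hδ : 0 < δ) (hψ : 0 ≤ ψ) (hm : 0 < m)
    (hdisj : 4*m*A ≥ B ∨ B ≤ 8*A*(m*(1-m))) :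
    B*δ*(2*δ*m + ψ) ≤ m*A*(2*δ+ψ)^2 := by
  rcases hdisj with h | h
  · nlinarith [mul_nonneg (mul_nonneg hm.le hA.le) (sq_nonneg ψ),
      mul_nonneg (mul_nonneg hδ.le hψ) (sub_nonneg.2 h),
      mul_pos (mul_pos hm (mul_pos hδ hδ)) (show (0:ℝ) < 2*A - B by linarith)]
  · nlinarith [sq_nonneg (2*m*A*ψ + δ*(4*m*A - B)), mul_pos hm hA,
      mul_nonneg (sq_nonneg δ) (mul_nonneg hB.le (sub_nonneg.2 h))]

private lemma hasDeriv_uG (k δ α uH uL p : ℝ) (x : ℝ) (hx : 0 < x) (hα : 0 < α) (hδ : 0 < δ) :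
    HasDerivAt (fun lam : ℝ => lam ^ (k - 1) * (uH - p - (uH - uL) * δ / (2 * δ + lam ^ k * α)))
      ((k-1) * x ^ (k-1-1) * (uH - p - (uH - uL) * δ / (2 * δ + x ^ k * α))
        + x ^ (k-1) * (0 - (0 * (2 * δ + x ^ k * α) - (uH - uL) * δ * (k * x ^ (k-1) * α))
            / (2 * δ + x ^ k * α) ^ 2)) x := by
  have hD : (2 * δ + x ^ k * α) ≠ 0 := by
    have := Real.rpow_pos_of_pos hx k
    positivity
  have h1 : HasDerivAt (fun y : ℝ => y ^ (k-1)) ((k-1) * x ^ (k-1-1)) x :=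
    Real.hasDerivAt_rpow_const (Or.inl hx.ne')
  have h2 : HasDerivAt (fun y : ℝ => y ^ k) (k * x ^ (k-1)) x :=
    Real.hasDerivAt_rpow_const (Or.inl hx.ne')
  have hDen : HasDerivAt (fun y : ℝ => 2 * δ + y ^ k * α) (0 + k * x ^ (k-1) * α) x :=
    (hasDerivAt_const x (2*δ)).add (h2.mul_const α)
  have hq : HasDerivAt (fun y : ℝ => (uH - uL) * δ / (2 * δ + y ^ k * α))
      ((0 * (2 * δ + x ^ k * α) - (uH - uL) * δ * (0 + k * x ^ (k-1) * α)) / (2 * δ + x ^ k * α) ^ 2) x :=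
    (hasDerivAt_const x ((uH - uL) * δ)).div hDen hD
  have hsub := (hasDerivAt_const x (uH - p)).sub hq
  have := h1.mul hsub
  exact this.congr_deriv (by simp only [Pi.sub_apply]; ring)


theorem uG_monotone (k δ α uH uL p : ℝ)
    (hk : k ∈ Set.Ioo (0:ℝ) 1) (hδ : 0 < δ) (hα : 0 < α)
    (hu : uH > uL) (huL : uL ≥ 0) (hp : p ≥ 0) (hgain : (uH + uL) / 2 > p)
    (hksmall : k ≤ (1 + Real.sqrt (1 - (uH - uL) / (2 * (uH - p)))) / 2) :
    AntitoneOn (fun lam : ℝ => lam ^ (k - 1) * (uH - p - (uH - uL) * δ / (2 * δ + lam ^ k * α)))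
      (Set.Ioi 0) := by
  obtain ⟨hk0, hk1⟩ := hk
  have hA : 0 < uH - p := by linarith
  have hB : 0 < uH - uL := by linarith
  have hBA : uH - uL < 2 * (uH - p) := by linarith
  -- the disjunction
  have hdisj : 4*(1-k)*(uH-p) ≥ (uH - uL) ∨ (uH - uL) ≤ 8*(uH-p)*((1-k)*(1-(1-k))) := by
    by_cases hcase : 4*(1-k)*(uH-p) ≥ (uH - uL)
    · exact Or.inl hcase
    · right
      push_neg at hcase
      have hkhalf : 1/2 < k := by nlinarith
      set s := Real.sqrt (1 - (uH - uL) / (2 * (uH - p))) with hs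
      have harg : 0 ≤ 1 - (uH - uL) / (2 * (uH - p)) := by
        rw [sub_nonneg, div_le_one (by linarith)]
        linarith
      have hs0 : 0 ≤ s := Real.sqrt_nonneg _
      have hs2 : s^2 = 1 - (uH - uL) / (2 * (uH - p)) := Real.sq_sqrt harg
      have hss : 2*(uH-p)*s^2 = 2*(uH-p) - (uH - uL) := by
        rw [hs2]; field_simp
      have hks : 2*k - 1 ≤ s := by linarith
      have hksq : (2*k-1)*(2*k-1) ≤ s*s :=
        mul_self_le_mul_self (by linarith) hks
      nlinarith [hksq, hss, hA]
  apply antitoneOn_of_deriv_nonpos (convex_Ioi 0)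
  · exact fun x hx => ((hasDeriv_uG k δ α uH uL p x hx hα hδ).continuousAt).continuousWithinAt
  · intro x hx
    rw [interior_Ioi] at hx
    exact (hasDeriv_uG k δ α uH uL p x hx hα hδ).differentiableAt.differentiableWithinAt
  · intro x hx
    rw [interior_Ioi] at hx
    rw [(hasDeriv_uG k δ α uH uL p x hx hα hδ).deriv]
    set ψ := x ^ k * α with hψdef
    have hψ : 0 < ψ := mul_pos (Real.rpow_pos_of_pos hx k) hα
    have hD : 0 < 2*δ + ψ := by linarith
    have hpow : x ^ (k-1) * (x ^ (k-1)) = x ^ (k-1-1) * x ^ k := by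
      rw [← Real.rpow_add hx, ← Real.rpow_add hx]; ring_nf
    have hxe : 0 ≤ x ^ (k-1-1) := (Real.rpow_pos_of_pos hx _).le
    have key : (uH - uL)*δ*(2*δ*(1-k) + ψ) ≤ (1-k)*(uH-p)*(2*δ+ψ)^2 :=
      key_ineq (uH-p) (uH-uL) δ (1-k) ψ hA hB hBA hδ hψ.le (by linarith) (by
        rcases hdisj with h | h
        · exact Or.inl h
        · exact Or.inr (by linarith [h]))
    have hval : (k-1) * x ^ (k-1-1) * (uH - p - (uH - uL) * δ / (2 * δ + ψ))
        + x ^ (k-1) * (0 - (0 * (2 * δ + ψ) - (uH - uL) * δ * (k * x ^ (k-1) * α))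
            / (2 * δ + ψ) ^ 2)
        = x ^ (k-1-1) * (((k-1)*(uH-p)*(2*δ+ψ)^2 + (uH-uL)*δ*(2*δ*(1-k) + ψ)) / (2*δ+ψ)^2) := by
      have hx1 : x ^ (k-1) * (0 - (0 * (2 * δ + ψ) - (uH - uL) * δ * (k * x ^ (k-1) * α))
            / (2 * δ + ψ) ^ 2)
          = x ^ (k-1-1) * ((uH - uL) * δ * (k * ψ) / (2*δ+ψ)^2) := by
        rw [hψdef]
        field_simp
        rw [zero_sub, ← neg_div, mul_div_assoc', div_left_inj' (pow_pos (by rw [← hψdef]; exact hD) 2).ne']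
        linear_combination ((uH-uL)*δ*k*α) * hpow
      rw [hx1]
      field_simp
      ring
    rw [hval]
    apply mul_nonpos_of_nonneg_of_nonpos hxe
    apply div_nonpos_of_nonpos_of_nonneg _ (sq_nonneg _)
    nlinarith [key]
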